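/- Let q ∈ (1/2,1), λ ∈ (0,1], K ≥ 2 even, and set p(x)=λx+(1-λ)q, y = p(x), g(y) = (q(1-y)+(1-q)y)·(y(1-y))^{K/2-1}. Then dg/dy = (y(1-y))^{K/2-2}·((K/2-1)(2y-1)(q(2y-1)-y) - (2q-1)(1-y)y), and dg/dy < 0 for all y ∈ (1/2, 1). -/

import Mathlib

theorem stmt2 (q lam : ℝ) (K : ℕ)
    (hq : q ∈ Set.Ioo (1/2 : ℝ) 1) (hlam : lam ∈ Set.Ioc (0:ℝ) 1)
    (hK : 2 ≤ K) (hKeven : Even K)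
    (g g' : ℝ → ℝ)
    (hg : ∀ y, g y = (q * (1 - y) + (1 - q) * y) * (y * (1 - y)) ^ ((K / 2 : ℤ) - 1))
    (hg' : ∀ y, g' y = (y * (1 - y)) ^ ((K / 2 : ℤ) - 2) *
      ((((K : ℝ) / 2 - 1) * (2 * y - 1) * (q * (2 * y - 1) - y))
        - (2 * q - 1) * (1 - y) * y)) :
    (∀ y ∈ Set.Ioo (0:ℝ) 1, HasDerivAt g (g' y) y) ∧
    (∀ y ∈ Set.Ioo (1/2 : ℝ) 1, g' y < 0) := by
  obtain ⟨m, hm⟩ := hKeven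
  subst hm
  have hm1 : 1 ≤ m := by omega
  have hKZ : ((m + m : ℕ) / 2 : ℤ) = (m : ℤ) := by push_cast; ring_nf; omega
  have hKR : ((m + m : ℕ) : ℝ) / 2 = (m : ℝ) := by push_cast; ring
  constructor
  · rintro y ⟨hy0, hy1⟩
    have hvpos : 0 < y * (1 - y) := mul_pos hy0 (by linarith)
    have hv : y * (1 - y) ≠ 0 := ne_of_gt hvpos
    have hgeq : g = fun x => (q * (1 - x) + (1 - q) * x) * (x * (1 - x)) ^ (((m+m : ℕ) / 2 : ℤ) - 1) :=
      funext hg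
    rw [hgeq]
    have hid : HasDerivAt (fun x : ℝ => x) 1 y := hasDerivAt_id y
    have hu : HasDerivAt (fun x => q * (1 - x) + (1 - q) * x) (q * (0 - 1) + (1 - q) * 1) y :=
      (((hasDerivAt_const y (1:ℝ)).sub hid).const_mul q).add (hid.const_mul (1 - q))
    have hw : HasDerivAt (fun x : ℝ => x * (1 - x)) (1 * (1 - y) + y * (0 - 1)) y :=
      hid.mul ((hasDerivAt_const y (1:ℝ)).sub hid)
    have hz : HasDerivAt (fun x : ℝ => (x * (1 - x)) ^ (((m+m : ℕ) / 2 : ℤ) - 1))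
        ((((((m+m : ℕ) / 2 : ℤ) - 1) : ℤ) : ℝ) * (y * (1 - y)) ^ ((((m+m : ℕ) / 2 : ℤ) - 1) - 1)
          * (1 * (1 - y) + y * (0 - 1))) y := by
      exact (hasDerivAt_zpow _ _ (Or.inl hv)).comp y hw
    have := hu.mul hz
    convert this using 1
    · rfl
    · rfl
    · rfl
    rw [hg', hKZ, hKR]
    have hsplit : (y * (1 - y)) ^ ((m : ℤ) - 1) = (y * (1 - y)) ^ ((m : ℤ) - 2) * (y * (1 - y)) := by
      rw [← zpow_add_one₀ hv]; ring_nf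
    rw [hsplit]
    push_cast
    ring
  · rintro y ⟨hy0, hy1⟩
    rw [hg', hKZ, hKR]
    have hvpos : 0 < y * (1 - y) := mul_pos (by linarith) (by linarith)
    have hzp : 0 < (y * (1 - y)) ^ ((m : ℤ) - 2) := zpow_pos hvpos _
    have hmR : (1 : ℝ) ≤ (m : ℝ) := by exact_mod_cast hm1
    apply mul_neg_of_pos_of_neg hzp
    have h1 : q * (2 * y - 1) - y < 0 := by nlinarith [hq.1, hq.2]
    have h2 : ((m : ℝ) - 1) * (2 * y - 1) * (q * (2 * y - 1) - y) ≤ 0 := by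
      apply mul_nonpos_of_nonneg_of_nonpos
      · nlinarith
      · linarith
    nlinarith [hq.1, hq.2]
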